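/- Let β ∈ ℂ with Re(β) > 0, let ε > 0 and k ∈ ℕ, and let D be the union of a nonempty family of sets D_{h_l,h_u} associated with lower-upper pairs of type (β,ε,k). Let f : D → ℂ satisfy the uniform asymptotic bound: for every δ > 0 there exists R₀ > exp^∘k(0) such that for all ζ ∈ D with Re(ζ) ≥ R₀ the iterated principal logarithms L₁(ζ),…,L_k(ζ) are defined and |f(ζ) − ζ − β| ≤ δ · |ζ · L₁(ζ) ⋯ L_{k−1}(ζ) · L_k(ζ)^{1+ε}|^{−1} (for k = 0 read this bound as δ·|ζ|^{−(1+ε)}). Then there exists R > 0 such that for every ζ ∈ D with Re(ζ) ≥ R one has f(ζ) ∈ D and Re(f(ζ)) > Re(ζ); in particular the set D ∩ {ζ : Re(ζ) ≥ R} is f-invariant. -/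

import Mathlib

open Filter Set

lemma exp_iter_nonneg (m : ℕ) : 0 ≤ Real.exp^[m] 0 := by
  induction m with
  | zero => simp
  | succ n ih => rw [Function.iterate_succ_apply']; exact (Real.exp_pos _).le

lemma log_iter_gt (k : ℕ) (x : ℝ) (hx : Real.exp^[k] 0 < x) :
    ∀ j ≤ k, Real.exp^[k - j] 0 < Real.log^[j] x := by
  intro j hj
  induction j with
  | zero => simpa using hx
  | succ n ih =>
    have hn : n < k := Nat.lt_of_succ_le hj
    have ihn := ih hn.le
    have hkn : k - n = (k - (n+1)) + 1 := by omega
    rw [hkn, Function.iterate_succ_apply'] at ihn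
    rw [Function.iterate_succ_apply']
    calc Real.exp^[k - (n+1)] 0
        = Real.log (Real.exp (Real.exp^[k - (n+1)] 0)) := (Real.log_exp _).symm
      _ < Real.log (Real.log^[n] x) := Real.log_lt_log (Real.exp_pos _) ihn

lemma log_iter_pos (k : ℕ) (x : ℝ) (hx : Real.exp^[k] 0 < x) {j : ℕ} (hj : j ≤ k) :
    0 < Real.log^[j] x :=
  lt_of_le_of_lt (exp_iter_nonneg _) (log_iter_gt k x hx j hj)

lemma abs_log_iter_le (k : ℕ) (ζ : ℂ) (hx : Real.exp^[k] 0 < ζ.re) :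
    ∀ m ≤ k, Real.log^[m] ζ.re ≤ ‖Complex.log^[m] ζ‖ := by
  intro m hm
  induction m with
  | zero => simpa using Complex.re_le_norm ζ
  | succ n ih =>
    have hn : n < k := Nat.lt_of_succ_le hm
    have ihn := ih hn.le
    have hpos : 0 < Real.log^[n] ζ.re := log_iter_pos k ζ.re hx hn.le
    rw [Function.iterate_succ_apply', Function.iterate_succ_apply']
    calc Real.log (Real.log^[n] ζ.re)
        ≤ Real.log (‖Complex.log^[n] ζ‖) := Real.log_le_log hpos ihn
      _ = (Complex.log (Complex.log^[n] ζ)).re := (Complex.log_re _).symm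
      _ ≤ ‖Complex.log (Complex.log^[n] ζ)‖ := Complex.re_le_norm _

/-- `M_{ε,k}(x) = (∏_{j=0}^{k-1} log^∘j(x))⁻¹ · (log^∘k(x))^{-(1+ε)}`. -/
noncomputable def Mfun (ε : ℝ) (k : ℕ) (x : ℝ) : ℝ :=
  (∏ j ∈ Finset.range k, Real.log^[j] x)⁻¹ * (Real.log^[k] x) ^ (-(1 + ε))

lemma Mfun_eq (ε : ℝ) (k : ℕ) (x : ℝ) (hx : Real.exp^[k] 0 < x) :
    Mfun ε k x = ((∏ j ∈ Finset.range k, Real.log^[j] x) *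
      (Real.log^[k] x) ^ (1 + ε))⁻¹ := by
  rw [Mfun, Real.rpow_neg (log_iter_pos k x hx le_rfl).le, mul_inv]

lemma Mfun_pos (ε : ℝ) (k : ℕ) (x : ℝ) (hx : Real.exp^[k] 0 < x) :
    0 < Mfun ε k x := by
  rw [Mfun_eq ε k x hx]
  refine inv_pos.mpr (mul_pos ?_ ?_)
  · exact Finset.prod_pos fun j hj => log_iter_pos k x hx (Finset.mem_range.mp hj).le
  · exact Real.rpow_pos_of_pos (log_iter_pos k x hx le_rfl) _

lemma inv_prod_le_Mfun (ε : ℝ) (hε : 0 < ε) (k : ℕ) (ζ : ℂ)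
    (hx : Real.exp^[k] 0 < ζ.re) :
    ((∏ m ∈ Finset.range k, ‖Complex.log^[m] ζ‖) *
      (‖Complex.log^[k] ζ‖) ^ (1 + ε))⁻¹ ≤ Mfun ε k ζ.re := by
  rw [Mfun_eq ε k ζ.re hx]
  have hBpos : 0 < (∏ j ∈ Finset.range k, Real.log^[j] ζ.re) *
      (Real.log^[k] ζ.re) ^ (1 + ε) :=
    mul_pos (Finset.prod_pos fun j hj => log_iter_pos k ζ.re hx (Finset.mem_range.mp hj).le)
      (Real.rpow_pos_of_pos (log_iter_pos k ζ.re hx le_rfl) _)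
  refine inv_anti₀ hBpos ?_
  refine mul_le_mul ?_ ?_ (Real.rpow_nonneg (log_iter_pos k ζ.re hx le_rfl).le _) ?_
  · exact Finset.prod_le_prod (fun j hj => (log_iter_pos k ζ.re hx (Finset.mem_range.mp hj).le).le)
      (fun j hj => abs_log_iter_le k ζ hx j (Finset.mem_range.mp hj).le)
  · exact Real.rpow_le_rpow (log_iter_pos k ζ.re hx le_rfl).le
      (abs_log_iter_le k ζ hx k le_rfl) (by linarith)
  · exact Finset.prod_nonneg fun j hj => (norm_nonneg _)

/-- `(t, hl, hu)` is a lower-upper pair of type `(β, ε, k)`. -/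
def IsLUPair (β : ℂ) (ε : ℝ) (k : ℕ) (t : ℝ) (hl hu : ℝ → ℝ) : Prop :=
  Real.exp^[k] 0 < t ∧
  (∀ x, t ≤ x → 0 < β.re - Mfun ε k x) ∧
  (∀ x, t ≤ x → hl x < hu x) ∧
  (0 < β.im →
    (∀ x, t ≤ x → 0 < β.im - Mfun ε k x) ∧
    (AntitoneOn hl (Set.Ici t) ∨
      (MonotoneOn hl (Set.Ici t) ∧
        ∀ x, t ≤ x → hl (x + (β.re + Mfun ε k x)) - hl x ≤ β.im - Mfun ε k x)) ∧
    MonotoneOn hu (Set.Ici t) ∧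
    (∀ x, t ≤ x → β.im + Mfun ε k x ≤ hu (x + (β.re - Mfun ε k x)) - hu x)) ∧
  (β.im = 0 →
    AntitoneOn hl (Set.Ici t) ∧
    (∀ x, t ≤ x → hl (x + (β.re - Mfun ε k x)) - hl x ≤ -(Mfun ε k x)) ∧
    MonotoneOn hu (Set.Ici t) ∧
    (∀ x, t ≤ x → Mfun ε k x ≤ hu (x + (β.re - Mfun ε k x)) - hu x)) ∧
  (β.im < 0 →
    (∀ x, t ≤ x → 0 < -β.im - Mfun ε k x) ∧
    AntitoneOn hl (Set.Ici t) ∧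
    (∀ x, t ≤ x → hl (x + (β.re - Mfun ε k x)) - hl x ≤ β.im - Mfun ε k x) ∧
    (MonotoneOn hu (Set.Ici t) ∨
      (AntitoneOn hu (Set.Ici t) ∧
        ∀ x, t ≤ x → β.im + Mfun ε k x ≤ hu (x + (β.re + Mfun ε k x)) - hu x))) 

/-- The set `D_{h_l,h_u}` associated with a lower-upper pair. -/
def DSet (t : ℝ) (hl hu : ℝ → ℝ) : Set ℂ :=
  {ζ : ℂ | t ≤ ζ.re ∧ hl ζ.re < ζ.im ∧ ζ.im < hu ζ.re}

theorem invariance_of_admissible_domains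
    (β : ℂ) (hβ : 0 < β.re) (ε : ℝ) (hε : 0 < ε) (k : ℕ)
    {I : Type} [Nonempty I] (t : I → ℝ) (hl hu : I → ℝ → ℝ)
    (hpair : ∀ i, IsLUPair β ε k (t i) (hl i) (hu i))
    (D : Set ℂ) (hD : D = ⋃ i, DSet (t i) (hl i) (hu i))
    (f : ℂ → ℂ)
    (hbound : ∀ δ > (0 : ℝ), ∃ R₀ : ℝ, Real.exp^[k] 0 < R₀ ∧
      ∀ ζ ∈ D, R₀ ≤ ζ.re →
        ‖f ζ - ζ - β‖ ≤ δ *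
          ((∏ m ∈ Finset.range k, ‖Complex.log^[m] ζ‖) *
            (‖Complex.log^[k] ζ‖) ^ (1 + ε))⁻¹) :
    ∃ R : ℝ, 0 < R ∧
      (∀ ζ ∈ D, R ≤ ζ.re → f ζ ∈ D ∧ ζ.re < (f ζ).re) ∧
      Set.MapsTo f (D ∩ {ζ : ℂ | R ≤ ζ.re}) (D ∩ {ζ : ℂ | R ≤ ζ.re}) := by
  obtain ⟨R₀, hR₀gt, hb⟩ := hbound 1 one_pos
  have hR₀pos : 0 < R₀ := lt_of_le_of_lt (exp_iter_nonneg k) hR₀gt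
  have key : ∀ ζ ∈ D, R₀ ≤ ζ.re → f ζ ∈ D ∧ ζ.re < (f ζ).re := by
    intro ζ hζD hRζ
    have hx : Real.exp^[k] 0 < ζ.re := lt_of_lt_of_le hR₀gt hRζ
    obtain ⟨i, hmem⟩ := Set.mem_iUnion.mp (hD ▸ hζD)
    obtain ⟨hti, hlo, hhi⟩ := hmem
    obtain ⟨hti0, hρ, hlu, hcpos, hczero, hcneg⟩ := hpair i
    set x := ζ.re with hxdef
    set M := Mfun ε k x with hMdef
    have hMpos : 0 < M := Mfun_pos ε k x hx
    have hρx : 0 < β.re - M := hρ x hti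
    have hM : ‖f ζ - ζ - β‖ ≤ M := by
      calc ‖f ζ - ζ - β‖ ≤ 1 * ((∏ m ∈ Finset.range k, ‖Complex.log^[m] ζ‖) *
            (‖Complex.log^[k] ζ‖) ^ (1 + ε))⁻¹ := hb ζ hζD hRζ
        _ ≤ M := by rw [one_mul]; exact inv_prod_le_Mfun ε hε k ζ hx
    set w := f ζ - ζ - β with hw
    have hfeq : f ζ = w + ζ + β := by rw [hw]; ring
    have hre : (f ζ).re = w.re + x + β.re := by rw [hfeq]; simp [Complex.add_re, hxdef]
    have him : (f ζ).im = w.im + ζ.im + β.im := by rw [hfeq]; simp [Complex.add_im]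
    have hwre := abs_le.mp ((Complex.abs_re_le_norm w).trans hM)
    have hwim := abs_le.mp ((Complex.abs_im_le_norm w).trans hM)
    have hre1 : x + (β.re - M) ≤ (f ζ).re := by rw [hre]; linarith [hwre.1]
    have hre2 : (f ζ).re ≤ x + (β.re + M) := by rw [hre]; linarith [hwre.2]
    have him1 : ζ.im + (β.im - M) ≤ (f ζ).im := by rw [him]; linarith [hwim.1]
    have him2 : (f ζ).im ≤ ζ.im + (β.im + M) := by rw [him]; linarith [hwim.2]
    have hxf : x < (f ζ).re := lt_of_lt_of_le (by linarith) hre1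
    have htf : t i ≤ (f ζ).re := le_trans hti hxf.le
    have htx : t i ≤ x := hti
    have htlo : t i ≤ x + (β.re - M) := by linarith
    have hthi : t i ≤ x + (β.re + M) := by linarith
    refine ⟨?_, hxf⟩
    rw [hD]
    refine Set.mem_iUnion.mpr ⟨i, htf, ?_, ?_⟩
    · -- lower bound : hl i (f ζ).re < (f ζ).im
      rcases lt_trichotomy β.im 0 with hb0 | hb0 | hb0
      · obtain ⟨hbm, hlA, hlB, _⟩ := hcneg hb0
        have h1 : hl i (f ζ).re ≤ hl i (x + (β.re - M)) :=
          hlA (Set.mem_Ici.mpr htlo) (Set.mem_Ici.mpr htf) hre1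
        have h2 := hlB x hti
        linarith
      · obtain ⟨hlA, hlB, _, _⟩ := hczero hb0
        have h1 : hl i (f ζ).re ≤ hl i (x + (β.re - M)) :=
          hlA (Set.mem_Ici.mpr htlo) (Set.mem_Ici.mpr htf) hre1
        have h2 := hlB x hti
        rw [hb0] at him1
        linarith
      · obtain ⟨hbm, hlalt, _, _⟩ := hcpos hb0
        rcases hlalt with hlA | ⟨hlM, hlB⟩
        · have h1 : hl i (f ζ).re ≤ hl i x :=
            hlA (Set.mem_Ici.mpr htx) (Set.mem_Ici.mpr htf) hxf.le
          have h2 := hbm x hti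
          linarith
        · have h1 : hl i (f ζ).re ≤ hl i (x + (β.re + M)) :=
            hlM (Set.mem_Ici.mpr htf) (Set.mem_Ici.mpr hthi) hre2
          have h2 := hlB x hti
          linarith
    · -- upper bound : (f ζ).im < hu i (f ζ).re
      rcases lt_trichotomy β.im 0 with hb0 | hb0 | hb0
      · obtain ⟨hbm, _, _, hualt⟩ := hcneg hb0
        rcases hualt with huM | ⟨huA, huB⟩
        · have h1 : hu i x ≤ hu i (f ζ).re :=
            huM (Set.mem_Ici.mpr htx) (Set.mem_Ici.mpr htf) hxf.le
          have h2 := hbm x hti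
          linarith
        · have h1 : hu i (x + (β.re + M)) ≤ hu i (f ζ).re :=
            huA (Set.mem_Ici.mpr htf) (Set.mem_Ici.mpr hthi) hre2
          have h2 := huB x hti
          linarith
      · obtain ⟨_, _, huM, huB⟩ := hczero hb0
        have h1 : hu i (x + (β.re - M)) ≤ hu i (f ζ).re :=
          huM (Set.mem_Ici.mpr htlo) (Set.mem_Ici.mpr htf) hre1
        have h2 := huB x hti
        rw [hb0] at him2
        linarith
      · obtain ⟨_, _, huM, huB⟩ := hcpos hb0
        have h1 : hu i (x + (β.re - M)) ≤ hu i (f ζ).re :=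
          huM (Set.mem_Ici.mpr htlo) (Set.mem_Ici.mpr htf) hre1
        have h2 := huB x hti
        linarith
  refine ⟨R₀, hR₀pos, key, ?_⟩
  rintro ζ ⟨hζD, hζR⟩
  obtain ⟨hfD, hfre⟩ := key ζ hζD hζR
  exact ⟨hfD, le_of_lt (lt_of_le_of_lt hζR hfre)⟩
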